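/- Let h : ℝ → ℝ be strictly concave and let Γ ⊆ ℝⁿ be a set that is finitely minimal for the cost c(x) = h(x₁ + ⋯ + x_n) with respect to the marginal constraints of the multi-marginal transport problem with marginals μ₁, …, μ_n. Then Γ is monotone: for any x, y ∈ Γ, either x_i ≤ y_i for all i or y_i ≤ x_i for all i. Specifically, if x, y ∈ Γ are not coordinatewise comparable, then the measure α′ = ½δ_{max{x,y}} + ½δ_{min{x,y}} (coordinatewise max and min) has the same coordinate marginals as α = ½δ_x + ½δ_y and satisfies ∫ c dα′ < ∫ c dα. -/

import Mathlib

open MeasureTheory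
open scoped ENNReal

/-- `Γ ⊆ ℝⁿ` is finitely minimal for the cost `c` with respect to the multi-marginal
constraints: no finite measure concentrated on finitely many points of `Γ` admits a
`c`-better competitor (a finitely supported finite measure with the same total mass and
the same `i`-th coordinate marginal for every `i`). -/
def FinitelyMinimalMulti {n : ℕ} (c : (Fin n → ℝ) → ℝ) (Γ : Set (Fin n → ℝ)) : Prop :=
  ∀ α α' : Measure (Fin n → ℝ), IsFiniteMeasure α → IsFiniteMeasure α' →
    (∃ S : Finset (Fin n → ℝ), ↑S ⊆ Γ ∧ α (↑S : Set (Fin n → ℝ))ᶜ = 0) →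
    (∃ S : Finset (Fin n → ℝ), α' (↑S : Set (Fin n → ℝ))ᶜ = 0) →
    α' Set.univ = α Set.univ →
    (∀ i, α'.map (fun z => z i) = α.map (fun z => z i)) →
    ¬ (∫ z, c z ∂α' < ∫ z, c z ∂α)

lemma integrable_dirac' {α : Type*} [MeasurableSpace α] [MeasurableSingletonClass α]
    (f : α → ℝ) (a : α) : Integrable f (Measure.dirac a) := by
  exact (integrable_const (f a)).congr (MeasureTheory.ae_eq_dirac f).symm

lemma integral_half {α : Type*} [MeasurableSpace α] [MeasurableSingletonClass α]
    (f : α → ℝ) (a b : α) :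
    ∫ z, f z ∂((2⁻¹ : ℝ≥0∞) • Measure.dirac a + (2⁻¹ : ℝ≥0∞) • Measure.dirac b)
      = 2⁻¹ * f a + 2⁻¹ * f b := by
  have ha : Integrable f ((2⁻¹ : ℝ≥0∞) • Measure.dirac a) :=
    ((integrable_smul_measure (by norm_num) (by norm_num)).mpr (integrable_dirac' f a))
  have hb : Integrable f ((2⁻¹ : ℝ≥0∞) • Measure.dirac b) :=
    ((integrable_smul_measure (by norm_num) (by norm_num)).mpr (integrable_dirac' f b))
  rw [integral_add_measure ha hb, integral_smul_measure, integral_smul_measure,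
    integral_dirac, integral_dirac]
  norm_num

lemma concave_key (h : ℝ → ℝ) (hconc : StrictConcaveOn ℝ Set.univ h)
    {M m a b : ℝ} (h1 : m < a) (h2 : a < M) (hab : a + b = M + m) :
    h M + h m < h a + h b := by
  have hd : 0 < M - m := by linarith
  set t : ℝ := (a - m) / (M - m) with ht
  have ht0 : 0 < t := div_pos (by linarith) hd
  have ht1 : 0 < 1 - t := by
    have : t < 1 := (div_lt_one hd).mpr (by linarith)
    linarith
  have hsum : t + (1 - t) = 1 := by ring
  have hMm : M ≠ m := by linarith
  have hea : t • M + (1 - t) • m = a := by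
    field_simp [ht, smul_eq_mul]
    have e : t * (M - m) = a - m := by rw [ht]; exact div_mul_cancel₀ _ (sub_ne_zero.mpr hMm)
    linear_combination e
  have heb : (1 - t) • M + t • m = b := by
    have h3 : (1-t) = (M - a)/(M-m) := by field_simp [ht]; rw [sub_mul, one_mul, ht, div_mul_cancel₀ _ (sub_ne_zero.mpr hMm)]; ring
    rw [h3]
    simp only [smul_eq_mul, ht]
    field_simp
    linear_combination (m - M) * hab
  have ia : t • h M + (1 - t) • h m < h a := by
    have := hconc.2 (Set.mem_univ M) (Set.mem_univ m) hMm ht0 ht1 hsum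
    rwa [hea] at this
  have ib : (1 - t) • h M + t • h m < h b := by
    have := hconc.2 (Set.mem_univ M) (Set.mem_univ m) hMm ht1 ht0 (by ring)
    rwa [heb] at this
  simp only [smul_eq_mul] at ia ib
  nlinarith [ia, ib]


lemma part2 {n : ℕ} (h : ℝ → ℝ) (hconc : StrictConcaveOn ℝ Set.univ h)
    (x y : Fin n → ℝ) (hxy : ¬ (x ≤ y ∨ y ≤ x)) :
    (∀ i, ((2⁻¹ : ℝ≥0∞) • Measure.dirac (x ⊔ y)
            + (2⁻¹ : ℝ≥0∞) • Measure.dirac (x ⊓ y)).map (fun z => z i)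
        = ((2⁻¹ : ℝ≥0∞) • Measure.dirac x
            + (2⁻¹ : ℝ≥0∞) • Measure.dirac y).map (fun z => z i)) ∧
    ∫ z, h (∑ i, z i)
        ∂((2⁻¹ : ℝ≥0∞) • Measure.dirac (x ⊔ y) + (2⁻¹ : ℝ≥0∞) • Measure.dirac (x ⊓ y))
      < ∫ z, h (∑ i, z i)
        ∂((2⁻¹ : ℝ≥0∞) • Measure.dirac x + (2⁻¹ : ℝ≥0∞) • Measure.dirac y) := by
  push_neg at hxy
  obtain ⟨hnxy, hnyx⟩ := hxy
  rw [Pi.le_def, not_forall] at hnxy hnyx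
  obtain ⟨i₀, hi₀⟩ := hnxy
  obtain ⟨j₀, hj₀⟩ := hnyx
  rw [not_le] at hi₀ hj₀
  constructor
  · intro i
    have hm : Measurable (fun z : Fin n → ℝ => z i) := measurable_pi_apply i
    rw [Measure.map_add _ _ hm, Measure.map_add _ _ hm, Measure.map_smul,
      Measure.map_smul, Measure.map_smul, Measure.map_smul,
      Measure.map_dirac' hm, Measure.map_dirac' hm, Measure.map_dirac' hm, Measure.map_dirac' hm]
    rcases le_total (x i) (y i) with hle | hle
    · rw [show (x ⊔ y) i = y i from by simp [Pi.sup_apply, sup_eq_right.mpr hle],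
        show (x ⊓ y) i = x i from by simp [Pi.inf_apply, inf_eq_left.mpr hle],
        add_comm]
    · rw [show (x ⊔ y) i = x i from by simp [Pi.sup_apply, sup_eq_left.mpr hle],
        show (x ⊓ y) i = y i from by simp [Pi.inf_apply, inf_eq_right.mpr hle]]
  · rw [integral_half, integral_half]
    have hsum : (∑ i, x i) + (∑ i, y i) = (∑ i, (x ⊔ y) i) + (∑ i, (x ⊓ y) i) := by
      rw [← Finset.sum_add_distrib, ← Finset.sum_add_distrib]
      refine Finset.sum_congr rfl fun i _ => ?_
      simp [Pi.sup_apply, Pi.inf_apply, max_add_min]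
    have hlt1 : (∑ i, (x ⊓ y) i) < ∑ i, x i := by
      refine Finset.sum_lt_sum (fun i _ => inf_le_left) ⟨i₀, Finset.mem_univ _, ?_⟩
      simp only [Pi.inf_apply]
      exact min_lt_of_right_lt hi₀
    have hlt2 : (∑ i, x i) < ∑ i, (x ⊔ y) i := by
      refine Finset.sum_lt_sum (fun i _ => le_sup_left) ⟨j₀, Finset.mem_univ _, ?_⟩
      simp only [Pi.sup_apply]
      exact lt_max_of_lt_right hj₀
    have key := concave_key h hconc hlt1 hlt2 hsum
    linarith

/-- **Lemma.** If `h : ℝ → ℝ` is strictly concave and `Γ ⊆ ℝⁿ` is finitely minimal for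
the cost `c(x) = h(x₁ + ⋯ + x_n)` with respect to the multi-marginal constraints, then
`Γ` is monotone. Specifically, for coordinatewise non-comparable `x, y ∈ Γ`, the measure
`α' = ½δ_{x⊔y} + ½δ_{x⊓y}` has the same coordinate marginals as `α = ½δ_x + ½δ_y` and
strictly smaller cost. -/
theorem statement14
    {n : ℕ} (h : ℝ → ℝ) (hconc : StrictConcaveOn ℝ Set.univ h)
    (Γ : Set (Fin n → ℝ))
    (hΓ : FinitelyMinimalMulti (fun z => h (∑ i, z i)) Γ) :
    (∀ x ∈ Γ, ∀ y ∈ Γ, x ≤ y ∨ y ≤ x) ∧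
    (∀ x ∈ Γ, ∀ y ∈ Γ, ¬ (x ≤ y ∨ y ≤ x) →
      (∀ i, ((2⁻¹ : ℝ≥0∞) • Measure.dirac (x ⊔ y)
              + (2⁻¹ : ℝ≥0∞) • Measure.dirac (x ⊓ y)).map (fun z => z i)
          = ((2⁻¹ : ℝ≥0∞) • Measure.dirac x
              + (2⁻¹ : ℝ≥0∞) • Measure.dirac y).map (fun z => z i)) ∧
      ∫ z, h (∑ i, z i)
          ∂((2⁻¹ : ℝ≥0∞) • Measure.dirac (x ⊔ y) + (2⁻¹ : ℝ≥0∞) • Measure.dirac (x ⊓ y))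
        < ∫ z, h (∑ i, z i)
          ∂((2⁻¹ : ℝ≥0∞) • Measure.dirac x + (2⁻¹ : ℝ≥0∞) • Measure.dirac y)) := by
  refine ⟨?_, fun x _ y _ hxy => part2 h hconc x y hxy⟩
  intro x hx y hy
  by_contra hxy
  obtain ⟨hmarg, hint⟩ := part2 h hconc x y hxy
  set α : Measure (Fin n → ℝ) := (2⁻¹ : ℝ≥0∞) • Measure.dirac x + (2⁻¹ : ℝ≥0∞) • Measure.dirac y with hα
  set α' : Measure (Fin n → ℝ) := (2⁻¹ : ℝ≥0∞) • Measure.dirac (x ⊔ y) + (2⁻¹ : ℝ≥0∞) • Measure.dirac (x ⊓ y) with hα'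
  have fin1 : IsFiniteMeasure α := by
    constructor
    simp [hα, Measure.add_apply, Measure.smul_apply]
  have fin2 : IsFiniteMeasure α' := by
    constructor
    simp [hα', Measure.add_apply, Measure.smul_apply]
  refine hΓ α α' fin1 fin2 ⟨{x, y}, ?_, ?_⟩ ⟨{x ⊔ y, x ⊓ y}, ?_⟩ ?_ hmarg hint
  · intro z hz
    simp only [Finset.coe_insert, Finset.coe_singleton, Set.mem_insert_iff,
      Set.mem_singleton_iff] at hz
    rcases hz with rfl | rfl
    · exact hx
    · exact hy
  · have hxm : x ∉ ((↑({x, y} : Finset (Fin n → ℝ)) : Set (Fin n → ℝ)))ᶜ := by simp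
    have hym : y ∉ ((↑({x, y} : Finset (Fin n → ℝ)) : Set (Fin n → ℝ)))ᶜ := by simp
    simp [hα, Measure.add_apply, Measure.smul_apply, Measure.dirac_apply,
      Set.indicator_of_notMem hxm, Set.indicator_of_notMem hym]
  · have hxm : x ⊔ y ∉ ((↑({x ⊔ y, x ⊓ y} : Finset (Fin n → ℝ)) : Set (Fin n → ℝ)))ᶜ := by simp
    have hym : x ⊓ y ∉ ((↑({x ⊔ y, x ⊓ y} : Finset (Fin n → ℝ)) : Set (Fin n → ℝ)))ᶜ := by simp
    simp [hα', Measure.add_apply, Measure.smul_apply, Measure.dirac_apply,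
      Set.indicator_of_notMem hxm, Set.indicator_of_notMem hym]
  · simp [hα, hα', Measure.add_apply, Measure.smul_apply]
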